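/- Let R be a commutative ℚ-algebra and R[z] the polynomial ring in one variable z. Let i ≥ 1 be an integer, let u₀, v_i, w_{2i} ∈ R, let U, V, W ∈ R[z], and set u = u₀ + z·U, v = v_i·z^i + z^(i+1)·V, w = w_{2i}·z^(2i) + z^(2i+1)·W, f = −(1/3)·u² + v, and g = (2/27)·u³ − (1/3)·u·v + w in R[z]. Then 4·f³ + 27·g² ≡ u₀²·(4·u₀·w_{2i} − v_i²)·z^(2i) (mod z^(2i+1)). -/

import Mathlib

open Polynomial

/-- Residual discriminant for a Kodaira type I_n fiber with `n = 2i` even, in the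
inductive Tate form: with `u = u₀ + zU`, `v = vᵢ z^i + z^(i+1) V`,
`w = w₂ᵢ z^(2i) + z^(2i+1) W`, `f = -(1/3)u² + v`, `g = (2/27)u³ - (1/3)uv + w`,
one has `4f³ + 27g² ≡ u₀²(4u₀w₂ᵢ - vᵢ²) z^(2i) (mod z^(2i+1))`. -/
theorem stmt_13 {R : Type*} [CommRing R] [Algebra ℚ R]
    (i : ℕ) (hi : 1 ≤ i) (u₀ vi w2i : R) (U V W u v w f g : Polynomial R)
    (hu : u = C u₀ + X * U)
    (hv : v = C vi * X ^ i + X ^ (i + 1) * V)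
    (hw : w = C w2i * X ^ (2 * i) + X ^ (2 * i + 1) * W)
    (hf : f = C (-(algebraMap ℚ R (1/3))) * u ^ 2 + v)
    (hg : g = C ((algebraMap ℚ R (2/27))) * u ^ 3 -
      C ((algebraMap ℚ R (1/3))) * u * v + w) :
    X ^ (2 * i + 1) ∣ 4 * f ^ 3 + 27 * g ^ 2 -
      C (u₀ ^ 2 * (4 * u₀ * w2i - vi ^ 2)) * X ^ (2 * i) := by
  set a : R := algebraMap ℚ R (1/3) with ha
  have hb : algebraMap ℚ R (2/27) = 2 * a ^ 3 := by
    rw [ha, ← map_pow, ← map_ofNat (algebraMap ℚ R) 2, ← map_mul]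
    norm_num
  have h3 : (3 : Polynomial R) * C a = 1 := by
    have : (3 : R) * a = 1 := by
      rw [ha, ← map_ofNat (algebraMap ℚ R) 3, ← map_mul]
      norm_num
    have := congrArg C this
    rw [map_mul, map_ofNat, map_one] at this
    exact this
  have key : 4 * f ^ 3 + 27 * g ^ 2 =
      4 * v ^ 3 - u ^ 2 * v ^ 2 + 4 * u ^ 3 * w - 18 * u * v * w + 27 * w ^ 2 := by
    rw [hf, hg, hb, map_neg, map_mul, map_pow, map_ofNat]
    linear_combination ((-1 : Polynomial R) * u ^ 2 * v ^ 2 +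
      (-18) * u * v * w + 4 * u ^ 3 * w + 9 * C a * u ^ 2 * v ^ 2 +
      12 * C a * u ^ 3 * w + 36 * (C a) ^ 2 * u ^ 3 * w +
      (-12) * (C a) ^ 2 * u ^ 4 * v + (-36) * (C a) ^ 3 * u ^ 4 * v +
      4 * (C a) ^ 3 * u ^ 6 + 12 * (C a) ^ 4 * u ^ 6 +
      36 * (C a) ^ 5 * u ^ 6) * h3
  obtain ⟨j, rfl⟩ : ∃ j, i = j + 1 := ⟨i - 1, (Nat.succ_pred_eq_of_pos hi).symm⟩
  rw [key, hu, hv, hw]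
  refine ⟨-2 * C u₀ * C vi ^ 2 * U +
    12 * C u₀ ^ 2 * C w2i * U +
    -2 * C u₀ ^ 2 * C vi * V +
    4 * C u₀ ^ 3 * W +
    4 * X ^ j * C vi ^ 3 +
    -18 * X ^ j * C u₀ * C vi * C w2i +
    -1 * X * C vi ^ 2 * U ^ 2 +
    12 * X * C u₀ * C w2i * U ^ 2 +
    -4 * X * C u₀ * C vi * U * V +
    -1 * X * C u₀ ^ 2 * V ^ 2 +
    12 * X * C u₀ ^ 2 * U * W +
    -18 * X * X ^ j * C vi * C w2i * U +
    12 * X * X ^ j * C vi ^ 2 * V +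
    -18 * X * X ^ j * C u₀ * C w2i * V +
    -18 * X * X ^ j * C u₀ * C vi * W +
    27 * X * (X ^ j) ^ 2 * C w2i ^ 2 +
    4 * X ^ 2 * C w2i * U ^ 3 +
    -2 * X ^ 2 * C vi * U ^ 2 * V +
    -2 * X ^ 2 * C u₀ * U * V ^ 2 +
    12 * X ^ 2 * C u₀ * U ^ 2 * W +
    -18 * X ^ 2 * X ^ j * C w2i * U * V +
    12 * X ^ 2 * X ^ j * C vi * V ^ 2 +
    -18 * X ^ 2 * X ^ j * C vi * U * W +
    -18 * X ^ 2 * X ^ j * C u₀ * V * W +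
    54 * X ^ 2 * (X ^ j) ^ 2 * C w2i * W +
    -1 * X ^ 3 * U ^ 2 * V ^ 2 +
    4 * X ^ 3 * U ^ 3 * W +
    4 * X ^ 3 * X ^ j * V ^ 3 +
    -18 * X ^ 3 * X ^ j * U * V * W +
    27 * X ^ 3 * (X ^ j) ^ 2 * W ^ 2, ?_⟩
  push_cast [map_mul, map_sub, map_pow, map_ofNat]
  ring
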